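/- arXiv:1710.04279 — 2 statements merged into one kernel-verified Lean document; each statement's English description precedes it below -/
import Mathlib

section
/- Every real square matrix K admits a unique decomposition K = K_real + K_imaginary + K_nilpotent into three pairwise commuting real matrices, where K_real is diagonalizable (over ℂ) with all eigenvalues real, K_imaginary is diagonalizable with all eigenvalues purely imaginary, and K_nilpotent is nilpotent. -/
open Matrix

/-- `A` is diagonalizable over `ℂ` and every eigenvalue (diagonal entry of the
diagonal form) satisfies the predicate `pred`. -/
def DiagonalizableWithSpec {n : ℕ} (pred : ℂ → Prop)
    (A : Matrix (Fin n) (Fin n) ℝ) : Prop :=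
  ∃ P D : Matrix (Fin n) (Fin n) ℂ, IsUnit P.det ∧ D.IsDiag ∧
    A.map (algebraMap ℝ ℂ) = P * D * P⁻¹ ∧ ∀ i, pred (D i i)

noncomputable section
structure JCSetup (n : ℕ) where
  f : Module.End ℂ (Fin n → ℂ)
  b : Module.Basis (Fin n) ℂ (Fin n → ℂ)
  eigval : Fin n → ℂ
  mem : ∀ i, b i ∈ f.maxGenEigenspace (eigval i)
  supp : ∀ (μ : ℂ) (v : Fin n → ℂ), v ∈ f.maxGenEigenspace μ →
    ∀ i, eigval i ≠ μ → b.repr v i = 0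

namespace JCSetup
variable {n : ℕ} (S : JCSetup n)

def diagEndo (g : ℂ → ℂ) : Module.End ℂ (Fin n → ℂ) :=
  S.b.constr ℂ fun i => g (S.eigval i) • S.b i

@[simp] lemma diagEndo_basis (g : ℂ → ℂ) (i : Fin n) :
    S.diagEndo g (S.b i) = g (S.eigval i) • S.b i := S.b.constr_basis ℂ _ i

lemma diagEndo_apply_of_mem (g : ℂ → ℂ) {μ : ℂ} {v : Fin n → ℂ}
    (hv : v ∈ S.f.maxGenEigenspace μ) : S.diagEndo g v = g μ • v := by
  conv_lhs => rw [← S.b.sum_repr v]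
  rw [map_sum]
  conv_rhs => rw [← S.b.sum_repr v, Finset.smul_sum]
  refine Finset.sum_congr rfl fun i _ => ?_
  rcases eq_or_ne (S.eigval i) μ with h | h
  · rw [_root_.map_smul, diagEndo_basis, h, smul_comm]
  · rw [S.supp μ v hv i h]; simp

lemma commute_f_diagEndo (g : ℂ → ℂ) : Commute S.f (S.diagEndo g) := by
  unfold Commute SemiconjBy
  apply S.b.ext
  intro i
  have hmem : S.f (S.b i) ∈ S.f.maxGenEigenspace (S.eigval i) :=
    (Module.End.mapsTo_maxGenEigenspace_of_comm (Commute.refl S.f) (S.eigval i)) (S.mem i)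
  rw [Module.End.mul_apply, Module.End.mul_apply, diagEndo_basis, _root_.map_smul,
    S.diagEndo_apply_of_mem g hmem]

lemma commute_diagEndo (g h : ℂ → ℂ) : Commute (S.diagEndo g) (S.diagEndo h) := by
  unfold Commute SemiconjBy
  apply S.b.ext
  intro i
  simp only [Module.End.mul_apply, diagEndo_basis, _root_.map_smul, smul_smul]
  rw [mul_comm]

lemma diagEndo_add (g h : ℂ → ℂ) :
    S.diagEndo g + S.diagEndo h = S.diagEndo (fun z => g z + h z) := by
  apply S.b.ext
  intro i
  rw [LinearMap.add_apply, diagEndo_basis, diagEndo_basis, diagEndo_basis, add_smul]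

def nilp : Module.End ℂ (Fin n → ℂ) := S.f - S.diagEndo id

lemma nilp_pow_basis (i : Fin n) (k : ℕ) :
    (S.nilp ^ k) (S.b i) = ((S.f - S.eigval i • 1) ^ k) (S.b i) ∧
      ((S.f - S.eigval i • 1) ^ k) (S.b i) ∈ S.f.maxGenEigenspace (S.eigval i) := by
  induction k with
  | zero => simpa using S.mem i
  | succ k ih =>
    obtain ⟨ih1, ih2⟩ := ih
    have hf : S.f (((S.f - S.eigval i • 1) ^ k) (S.b i)) ∈ S.f.maxGenEigenspace (S.eigval i) :=
      (Module.End.mapsTo_maxGenEigenspace_of_comm (Commute.refl S.f) (S.eigval i)) ih2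
    constructor
    · rw [pow_succ', pow_succ', Module.End.mul_apply, Module.End.mul_apply, ih1]
      rw [nilp, LinearMap.sub_apply, S.diagEndo_apply_of_mem id ih2, LinearMap.sub_apply]
      simp
    · rw [pow_succ', Module.End.mul_apply, LinearMap.sub_apply]
      have h1 : (S.eigval i • (1 : Module.End ℂ (Fin n → ℂ)))
          (((S.f - S.eigval i • 1) ^ k) (S.b i)) =
          S.eigval i • (((S.f - S.eigval i • 1) ^ k) (S.b i)) := rfl
      rw [h1]
      exact Submodule.sub_mem _ hf (Submodule.smul_mem _ (S.eigval i) ih2)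

lemma nilp_pow_n : S.nilp ^ n = 0 := by
  apply S.b.ext
  intro i
  rw [LinearMap.zero_apply, (S.nilp_pow_basis i n).1]
  have hmem := S.mem i
  rw [Module.End.maxGenEigenspace_eq_genEigenspace_finrank, Module.finrank_fin_fun,
    Module.End.mem_genEigenspace_nat] at hmem
  exact hmem

lemma toMatrix_diagEndo (g : ℂ → ℂ) :
    LinearMap.toMatrix S.b S.b (S.diagEndo g) = Matrix.diagonal (fun i => g (S.eigval i)) := by
  ext i j
  rw [LinearMap.toMatrix_apply, diagEndo_basis, _root_.map_smul, Module.Basis.repr_self]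
  rcases eq_or_ne i j with h | h
  · subst h; simp
  · simp [Matrix.diagonal_apply_ne _ h, Finsupp.single_apply, Ne.symm h]

def P : Matrix (Fin n) (Fin n) ℂ := (Pi.basisFun ℂ (Fin n)).toMatrix S.b

lemma P_mul : S.P * (S.b.toMatrix (Pi.basisFun ℂ (Fin n))) = 1 :=
  Module.Basis.toMatrix_mul_toMatrix_flip _ _

lemma P_inv : S.P⁻¹ = S.b.toMatrix (Pi.basisFun ℂ (Fin n)) := Matrix.inv_eq_right_inv S.P_mul

lemma isUnit_detP : IsUnit S.P.det := Matrix.isUnit_det_of_right_inverse S.P_mul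

lemma toMatrix'_diagEndo (g : ℂ → ℂ) :
    LinearMap.toMatrix' (S.diagEndo g) =
      S.P * Matrix.diagonal (fun i => g (S.eigval i)) * S.P⁻¹ := by
  rw [P_inv, ← toMatrix_diagEndo, ← LinearMap.toMatrix_eq_toMatrix', P]
  exact (basis_toMatrix_mul_linearMap_toMatrix_mul_basis_toMatrix _ _ _ _ _).symm


variable (f : Module.End ℂ (Fin n → ℂ))


lemma star_pow_apply (hreal : ∀ v, f (star v) = star (f v)) (μ : ℂ) (k : ℕ) (v : Fin n → ℂ) :
    ((f - star μ • 1) ^ k) (star v) = star (((f - μ • 1) ^ k) v) := by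
  induction k with
  | zero => simp
  | succ k ih =>
    rw [pow_succ', pow_succ', Module.End.mul_apply, Module.End.mul_apply, ih]
    set w := ((f - μ • 1) ^ k) v
    rw [LinearMap.sub_apply, LinearMap.sub_apply, hreal]
    have h1 : (star μ • (1 : Module.End ℂ (Fin n → ℂ))) (star w) = star μ • star w := rfl
    have h2 : (μ • (1 : Module.End ℂ (Fin n → ℂ))) w = μ • w := rfl
    rw [h1, h2, ← star_smul, ← star_sub]

lemma star_mem (hreal : ∀ v, f (star v) = star (f v)) {μ : ℂ} {v : Fin n → ℂ}
    (hv : v ∈ f.maxGenEigenspace μ) : star v ∈ f.maxGenEigenspace (star μ) := by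
  rw [Module.End.mem_maxGenEigenspace] at hv ⊢
  obtain ⟨k, hk⟩ := hv
  exact ⟨k, by rw [star_pow_apply f hreal μ k v, hk, star_zero]⟩



lemma diagEndo_star (hreal : ∀ v, S.f (star v) = star (S.f v)) (g : ℂ → ℂ)
    (hg : ∀ z, g (star z) = star (g z)) (v : Fin n → ℂ) :
    S.diagEndo g (star v) = star (S.diagEndo g v) := by
  have htop : v ∈ ⨆ μ : ℂ, S.f.maxGenEigenspace μ := by
    rw [Module.End.iSup_maxGenEigenspace_eq_top]; trivial
  refine Submodule.iSup_induction (fun μ : ℂ => S.f.maxGenEigenspace μ) (motive := fun w =>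
      S.diagEndo g (star w) = star (S.diagEndo g w)) htop (fun μ w hw => ?_) (by simp) ?_
  · show S.diagEndo g (star w) = star (S.diagEndo g w)
    rw [S.diagEndo_apply_of_mem g (star_mem S.f hreal hw), S.diagEndo_apply_of_mem g hw,
      star_smul, hg]
  · intro x y hx hy
    rw [star_add, map_add, map_add, star_add, hx, hy]

lemma exists_real_of_star_comm (hreal : ∀ v, S.f (star v) = star (S.f v)) (g : ℂ → ℂ)
    (hg : ∀ z, g (star z) = star (g z)) :
    ∃ R : Matrix (Fin n) (Fin n) ℝ,
      R.map (algebraMap ℝ ℂ) = LinearMap.toMatrix' (S.diagEndo g) := by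
  have key : ∀ i j, star (LinearMap.toMatrix' (S.diagEndo g) i j) =
      LinearMap.toMatrix' (S.diagEndo g) i j := by
    intro i j
    rw [LinearMap.toMatrix'_apply]
    rw [show (Pi.single j (1:ℂ) : Fin n → ℂ) = fun j' => if j' = j then (1:ℂ) else 0 from
      funext fun j' => by simp [Pi.single_apply]]
    have hu : star (fun j' => if j' = j then (1:ℂ) else 0) =
        (fun j' => if j' = j then (1:ℂ) else 0) := by
      funext j'; rcases eq_or_ne j' j with h|h <;> simp [h]
    calc star (S.diagEndo g (fun j' => if j' = j then (1:ℂ) else 0) i)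
        = (star (S.diagEndo g (fun j' => if j' = j then (1:ℂ) else 0))) i := rfl
      _ = S.diagEndo g (star (fun j' => if j' = j then (1:ℂ) else 0)) i := by
          rw [S.diagEndo_star hreal g hg]
      _ = _ := by rw [hu]
  refine ⟨fun i j => (LinearMap.toMatrix' (S.diagEndo g) i j).re, ?_⟩
  ext i j
  have := key i j
  rw [Complex.star_def, Complex.conj_eq_iff_im] at this
  show (algebraMap ℝ ℂ) (LinearMap.toMatrix' (S.diagEndo g) i j).re = _
  apply Complex.ext
  · simp
  · simpa using this.symm

end JCSetup
end

open Polynomial in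
lemma aeval_apply_eigen (r : Module.End ℂ (Fin n → ℂ)) {c : ℂ} {v : Fin n → ℂ}
    (hv : r v = c • v) (q : ℂ[X]) :
    Polynomial.aeval r q v = q.eval c • v := by
  have hpow : ∀ m : ℕ, (r ^ m) v = c ^ m • v := by
    intro m
    induction m with
    | zero => simp
    | succ m ih =>
      rw [pow_succ, pow_succ, Module.End.mul_apply, hv, _root_.map_smul, ih, smul_smul, mul_comm c (c ^ m)]
  induction q using Polynomial.induction_on' with
  | add p q hp hq => rw [map_add, LinearMap.add_apply, hp, hq, eval_add, add_smul]
  | monomial k a =>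
    rw [aeval_monomial, eval_monomial, Module.End.mul_apply, hpow,
      Module.algebraMap_end_apply, smul_smul]

open Polynomial in
lemma exists_annihilating (pred : ℂ → Prop) {Ac P D : Matrix (Fin n) (Fin n) ℂ}
    (hu : IsUnit P.det) (hD : D.IsDiag) (hA : Ac = P * D * P⁻¹) (hpred : ∀ i, pred (D i i)) :
    ∃ s : Finset ℂ, (∀ z ∈ s, pred z) ∧
      Polynomial.aeval (Matrix.toLinAlgEquiv' Ac) (∏ z ∈ s, (X - C z)) = 0 := by
  classical
  set s : Finset ℂ := Finset.image (fun i => D i i) Finset.univ with hs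
  set p : ℂ[X] := ∏ z ∈ s, (X - C z) with hp
  refine ⟨s, ?_, ?_⟩
  · intro z hz
    obtain ⟨i, _, rfl⟩ := Finset.mem_image.mp hz
    exact hpred i
  set r := Matrix.toLinAlgEquiv' Ac with hr
  have hAP : Ac * P = P * D := by
    rw [hA, Matrix.mul_assoc, Matrix.nonsing_inv_mul P hu, Matrix.mul_one]
  have heig : ∀ j, r (P.mulVec ((Pi.single j 1 : Fin n → ℂ))) = D j j • P.mulVec ((Pi.single j 1 : Fin n → ℂ)) := by
    intro j
    have h1 : r (P.mulVec ((Pi.single j 1 : Fin n → ℂ))) = (Ac * P).mulVec ((Pi.single j 1 : Fin n → ℂ)) := by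
      rw [Matrix.toLinAlgEquiv'_apply, ← Matrix.mulVec_mulVec]
    rw [h1, hAP, ← Matrix.mulVec_mulVec, ← hD.diagonal_diag, Matrix.diagonal_mulVec_single,
      hD.diagonal_diag]
    have : Pi.single j (D.diag j * 1) = D j j • (Pi.single j 1 : Fin n → ℂ) := by
      rw [mul_one, ← Pi.single_smul, smul_eq_mul, mul_one, Matrix.diag]
    rw [this, Matrix.mulVec_smul]
  have hz : ∀ j, (Polynomial.aeval r p) (P.mulVec ((Pi.single j 1 : Fin n → ℂ))) = 0 := by
    intro j
    rw [aeval_apply_eigen r (heig j) p]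
    have : p.eval (D j j) = 0 := by
      rw [hp, eval_prod]
      refine Finset.prod_eq_zero (Finset.mem_image.mpr ⟨j, Finset.mem_univ j, rfl⟩) ?_
      simp
    rw [this, zero_smul]
  apply LinearMap.ext
  intro v
  have hv : v = ∑ j, (P⁻¹.mulVec v j) • P.mulVec ((Pi.single j 1 : Fin n → ℂ)) := by
    have h2 : P.mulVec (P⁻¹.mulVec v) = v := by
      rw [Matrix.mulVec_mulVec, Matrix.mul_nonsing_inv P hu, Matrix.one_mulVec]
    conv_lhs => rw [← h2]
    have h3 : P⁻¹.mulVec v = ∑ j, (P⁻¹.mulVec v j) • (Pi.single j 1 : Fin n → ℂ) := by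
      funext i
      simp [Finset.sum_apply, Pi.single_apply]
    conv_lhs => rw [h3]
    rw [← Matrix.mulVecLin_apply, map_sum]
    simp [Matrix.mulVecLin_apply, Matrix.mulVec_smul]
  rw [hv, map_sum, LinearMap.zero_apply]
  refine Finset.sum_eq_zero fun j _ => ?_
  rw [_root_.map_smul, hz j, smul_zero]

open Polynomial in
lemma eigen_of_aeval_prod_eq_zero (g : Module.End ℂ (Fin n → ℂ)) (s : Finset ℂ)
    (hq : Polynomial.aeval g (∏ z ∈ s, (X - C z)) = 0) (μ : ℂ) (v : Fin n → ℂ)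
    (hv : v ∈ g.maxGenEigenspace μ) : g v = μ • v ∧ (v ≠ 0 → μ ∈ s) := by
  classical
  obtain ⟨k, hk⟩ := (Module.End.mem_maxGenEigenspace g μ v).mp hv
  have hXC : Polynomial.aeval g (X - C μ) = g - μ • 1 := by
    rw [map_sub, aeval_X, aeval_C, Module.algebraMap_end_eq_smul_id]
    rfl
  have haevalpow : Polynomial.aeval g ((X - C μ) ^ k) v = 0 := by
    rw [map_pow, hXC]
    exact hk
  have key : ∀ h : ℂ[X], ¬ ((X - C μ) ∣ h) →
      ∃ b : ℂ[X], v = Polynomial.aeval g b (Polynomial.aeval g h v) := by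
    intro h hnd
    have hcop : IsCoprime ((X - C μ) ^ k) h :=
      IsCoprime.pow_left (((irreducible_X_sub_C μ).coprime_iff_not_dvd).mpr hnd)
    obtain ⟨a, b, hab⟩ := hcop
    refine ⟨b, ?_⟩
    have h1 := congrArg (fun q : ℂ[X] => Polynomial.aeval g q v) hab
    simp only [map_add, _root_.map_mul, _root_.map_one, LinearMap.add_apply, Module.End.mul_apply,
      Module.End.one_apply] at h1
    rw [haevalpow, map_zero] at h1
    rw [zero_add] at h1
    exact h1.symm
  by_cases hμ : μ ∈ s
  · refine ⟨?_, fun _ => hμ⟩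
    have hnd : ¬ ((X - C μ) ∣ ∏ z ∈ s.erase μ, (X - C z)) := by
      rw [dvd_iff_isRoot]
      intro hroot
      rw [IsRoot, eval_prod] at hroot
      obtain ⟨z, hz, hz0⟩ := Finset.prod_eq_zero_iff.mp hroot
      have : μ - z ≠ 0 := sub_ne_zero.mpr (Ne.symm (Finset.mem_erase.mp hz).1)
      simp only [eval_sub, eval_X, eval_C] at hz0
      exact this hz0
    obtain ⟨b, hb⟩ := key _ hnd
    have hgv : (g - μ • 1) v = 0 := by
      conv_lhs => rw [hb]
      have h2 : (g - μ • 1) (Polynomial.aeval g b (Polynomial.aeval g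
          (∏ z ∈ s.erase μ, (X - C z)) v)) =
          Polynomial.aeval g ((X - C μ) * (b * ∏ z ∈ s.erase μ, (X - C z))) v := by
        rw [_root_.map_mul, _root_.map_mul, hXC]
        rfl
      rw [h2, mul_left_comm, Finset.mul_prod_erase s (fun z => X - C z) hμ, _root_.map_mul,
        Module.End.mul_apply, hq, LinearMap.zero_apply, map_zero]
    have hgv2 : g v - μ • v = 0 := hgv
    exact sub_eq_zero.mp hgv2
  · have hnd : ¬ ((X - C μ) ∣ ∏ z ∈ s, (X - C z)) := by
      rw [dvd_iff_isRoot]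
      intro hroot
      rw [IsRoot, eval_prod] at hroot
      obtain ⟨z, hz, hz0⟩ := Finset.prod_eq_zero_iff.mp hroot
      have : μ - z ≠ 0 := sub_ne_zero.mpr (fun h => hμ (h ▸ hz))
      simp only [eval_sub, eval_X, eval_C] at hz0
      exact this hz0
    obtain ⟨b, hb⟩ := key _ hnd
    rw [hq, LinearMap.zero_apply, map_zero] at hb
    subst hb
    exact ⟨by rw [map_zero, smul_zero], fun h => absurd rfl h⟩

open Polynomial in
lemma unique_core (S : JCSetup n) (r i m : Module.End ℂ (Fin n → ℂ))
    (hsum : S.f = r + i + m)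
    (hc1 : Commute r i) (hc2 : Commute r m) (hc3 : Commute i m)
    (sr : Finset ℂ) (hsr : ∀ z ∈ sr, z.im = 0)
    (hr : Polynomial.aeval r (∏ z ∈ sr, (X - C z)) = 0)
    (si : Finset ℂ) (hsi : ∀ z ∈ si, z.re = 0)
    (hi : Polynomial.aeval i (∏ z ∈ si, (X - C z)) = 0)
    (hm : IsNilpotent m) :
    r = S.diagEndo (fun z => (z.re : ℂ)) ∧
      i = S.diagEndo (fun z => (z.im : ℂ) * Complex.I) := by
  classical
  obtain ⟨l, hl⟩ := hm
  set F : Fin 3 → Module.End ℂ (Fin n → ℂ) :=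
    fun j => if j = 0 then r else if j = 1 then i else m with hF
  have hF0 : F 0 = r := rfl
  have hF1 : F 1 = i := rfl
  have hF2 : F 2 = m := rfl
  have hcomm : Pairwise fun a b => Commute (F a) (F b) := by
    intro a b hab
    fin_cases a <;> fin_cases b <;>
      first
        | exact absurd rfl hab
        | exact hc1 | exact hc1.symm | exact hc2 | exact hc2.symm
        | exact hc3 | exact hc3.symm
  have htop : ⨆ χ : Fin 3 → ℂ, ⨅ j, (F j).maxGenEigenspace (χ j) = ⊤ :=
    Module.End.iSup_iInf_maxGenEigenspace_eq_top_of_iSup_maxGenEigenspace_eq_top_of_commute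
      F hcomm (fun j => Module.End.iSup_maxGenEigenspace_eq_top _)
  have key : ∀ (χ : Fin 3 → ℂ) (v : Fin n → ℂ), v ∈ (⨅ j, (F j).maxGenEigenspace (χ j)) →
      r v = S.diagEndo (fun z => (z.re : ℂ)) v ∧
        i v = S.diagEndo (fun z => (z.im : ℂ) * Complex.I) v := by
    intro χ v hv
    rcases eq_or_ne v 0 with rfl | hv0
    · simp
    set W : Submodule ℂ (Fin n → ℂ) := ⨅ j, (F j).maxGenEigenspace (χ j) with hW
    have hmemW : ∀ w ∈ W, ∀ j, w ∈ (F j).maxGenEigenspace (χ j) := by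
      intro w hw j
      exact (Submodule.mem_iInf _).mp hw j
    have hscalarR : ∀ w ∈ W, r w = χ 0 • w :=
      fun w hw => (eigen_of_aeval_prod_eq_zero r sr hr (χ 0) w (hmemW w hw 0)).1
    have hscalarI : ∀ w ∈ W, i w = χ 1 • w :=
      fun w hw => (eigen_of_aeval_prod_eq_zero i si hi (χ 1) w (hmemW w hw 1)).1
    have hχ0 : χ 0 ∈ sr :=
      (eigen_of_aeval_prod_eq_zero r sr hr (χ 0) v (hmemW v hv 0)).2 hv0
    have hχ1 : χ 1 ∈ si :=
      (eigen_of_aeval_prod_eq_zero i si hi (χ 1) v (hmemW v hv 1)).2 hv0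
    -- m preserves W
    have hmW : ∀ w ∈ W, m w ∈ W := by
      intro w hw
      refine (Submodule.mem_iInf _).mpr fun j => ?_
      exact Module.End.mapsTo_maxGenEigenspace_of_comm
        (by fin_cases j
            · exact hc2
            · exact hc3
            · exact Commute.refl m) (χ j) (hmemW w hw j)
    -- the step: (f - (χ0+χ1)•1) acts as m on W
    have hstep : ∀ w ∈ W, (S.f - (χ 0 + χ 1) • 1) w = m w := by
      intro w hw
      rw [LinearMap.sub_apply, hsum, LinearMap.add_apply, LinearMap.add_apply,
        hscalarR w hw, hscalarI w hw]
      have : ((χ 0 + χ 1) • (1 : Module.End ℂ (Fin n → ℂ))) w = (χ 0 + χ 1) • w := rfl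
      rw [this, add_smul]
      abel
    have hpow : ∀ k : ℕ, ((S.f - (χ 0 + χ 1) • 1) ^ k) v = (m ^ k) v ∧ (m ^ k) v ∈ W := by
      intro k
      induction k with
      | zero => exact ⟨rfl, hv⟩
      | succ k ih =>
        obtain ⟨ih1, ih2⟩ := ih
        constructor
        · rw [pow_succ', pow_succ', Module.End.mul_apply, Module.End.mul_apply, ih1,
            hstep _ ih2]
        · rw [pow_succ', Module.End.mul_apply]
          exact hmW _ ih2
    have hvf : v ∈ S.f.maxGenEigenspace (χ 0 + χ 1) := by
      rw [Module.End.mem_maxGenEigenspace]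
      refine ⟨l, ?_⟩
      rw [(hpow l).1, hl, LinearMap.zero_apply]
    have him0 : (χ 0).im = 0 := hsr _ hχ0
    have hre1 : (χ 1).re = 0 := hsi _ hχ1
    constructor
    · rw [hscalarR v hv, S.diagEndo_apply_of_mem _ hvf]
      congr 1
      apply Complex.ext <;> simp [him0, hre1]
    · rw [hscalarI v hv, S.diagEndo_apply_of_mem _ hvf]
      congr 1
      apply Complex.ext <;> simp [him0, hre1]
  have main : ∀ v : Fin n → ℂ,
      r v = S.diagEndo (fun z => (z.re : ℂ)) v ∧
        i v = S.diagEndo (fun z => (z.im : ℂ) * Complex.I) v := by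
    intro v
    have hvtop : v ∈ ⨆ χ : Fin 3 → ℂ, ⨅ j, (F j).maxGenEigenspace (χ j) := by
      rw [htop]; trivial
    refine Submodule.iSup_induction (fun χ : Fin 3 → ℂ => ⨅ j, (F j).maxGenEigenspace (χ j))
      (motive := fun w => r w = S.diagEndo (fun z => (z.re : ℂ)) w ∧
        i w = S.diagEndo (fun z => (z.im : ℂ) * Complex.I) w) hvtop
      (fun χ w hw => key χ w hw) (by simp) ?_
    intro x y hx hy
    rw [map_add, map_add, map_add, map_add, hx.1, hx.2, hy.1, hy.2]
    exact ⟨rfl, rfl⟩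
  exact ⟨LinearMap.ext fun v => (main v).1, LinearMap.ext fun v => (main v).2⟩

theorem jcsetup_exists {n : ℕ} (f : Module.End ℂ (Fin n → ℂ)) :
    ∃ S : JCSetup n, S.f = f := by
  have h1 : ⨆ μ : ℂ, f.maxGenEigenspace μ = ⊤ := Module.End.iSup_maxGenEigenspace_eq_top f
  have h2 := f.independent_maxGenEigenspace
  have hInt : DirectSum.IsInternal (fun μ : ℂ => f.maxGenEigenspace μ) :=
    DirectSum.isInternal_submodule_of_iSupIndep_of_iSup_eq_top h2 h1
  obtain ⟨b0, hb0mem, hb0supp⟩ :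
      ∃ b0 : Module.Basis (Σ μ : ℂ, Fin (Module.finrank ℂ (f.maxGenEigenspace μ))) ℂ (Fin n → ℂ),
        (∀ a, b0 a ∈ f.maxGenEigenspace a.1) ∧
        (∀ (μ : ℂ) (w : Fin n → ℂ), w ∈ f.maxGenEigenspace μ →
          ∀ a, a.1 ≠ μ → b0.repr w a = 0) := by
    refine ⟨hInt.collectedBasis (fun μ => Module.finBasis ℂ _), fun a => ?_, fun μ w hw a ha => ?_⟩
    · exact hInt.collectedBasis_mem _ a
    · obtain ⟨aμ, ak⟩ := a
      exact hInt.collectedBasis_repr_of_mem_ne _ (Ne.symm ha) hw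
  let e := b0.indexEquiv (Pi.basisFun ℂ (Fin n))
  refine ⟨⟨f, b0.reindex e, fun i => (e.symm i).1, ?_, ?_⟩, rfl⟩
  · intro i
    rw [Module.Basis.reindex_apply]
    exact hb0mem _
  · intro μ w hw i hne
    rw [Module.Basis.repr_reindex_apply]
    exact hb0supp μ w hw _ hne


/-- Refined Jordan–Chevalley decomposition: every real square matrix `K` has a
unique decomposition `K = K_real + K_imaginary + K_nilpotent` into pairwise
commuting parts, with `K_real` diagonalizable over `ℂ` with real spectrum,
`K_imaginary` diagonalizable with purely imaginary spectrum, and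
`K_nilpotent` nilpotent. -/
theorem stmt_5 (n : ℕ) (K : Matrix (Fin n) (Fin n) ℝ) :
    ∃! T : Matrix (Fin n) (Fin n) ℝ × Matrix (Fin n) (Fin n) ℝ ×
        Matrix (Fin n) (Fin n) ℝ,
      K = T.1 + T.2.1 + T.2.2 ∧
      Commute T.1 T.2.1 ∧ Commute T.1 T.2.2 ∧ Commute T.2.1 T.2.2 ∧
      DiagonalizableWithSpec (fun z => z.im = 0) T.1 ∧
      DiagonalizableWithSpec (fun z => z.re = 0) T.2.1 ∧
      IsNilpotent T.2.2 := by
  classical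
  set φ : ℝ →+* ℂ := (algebraMap ℝ ℂ) with hφ
  have mapinj : ∀ X Y : Matrix (Fin n) (Fin n) ℝ, φ.mapMatrix X = φ.mapMatrix Y → X = Y := by
    intro X Y h
    ext i j
    have h2 : (φ.mapMatrix X) i j = (φ.mapMatrix Y) i j := by rw [h]
    simpa [RingHom.mapMatrix_apply, Matrix.map_apply] using Complex.ofReal_injective h2
  set Ac : Matrix (Fin n) (Fin n) ℂ := φ.mapMatrix K with hAc
  obtain ⟨S, hSf⟩ := jcsetup_exists (Matrix.toLinAlgEquiv' Ac)
  set E := (LinearMap.toMatrixAlgEquiv' :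
    Module.End ℂ (Fin n → ℂ) ≃ₐ[ℂ] Matrix (Fin n) (Fin n) ℂ) with hEdef
  have hE : ∀ h : Module.End ℂ (Fin n → ℂ), E h = LinearMap.toMatrix' h := fun _ => rfl
  have hEf : E S.f = Ac := by
    rw [hSf]
    exact LinearMap.toMatrixAlgEquiv'_toLinAlgEquiv' Ac
  set gre : ℂ → ℂ := fun z => (z.re : ℂ) with hgre
  set gim : ℂ → ℂ := fun z => (z.im : ℂ) * Complex.I with hgim
  have hreal : ∀ v, S.f (star v) = star (S.f v) := by
    intro v
    rw [hSf]
    rw [Matrix.toLinAlgEquiv'_apply, Matrix.toLinAlgEquiv'_apply]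
    funext x
    simp only [Matrix.mulVec, dotProduct, Pi.star_apply, hAc,
      RingHom.mapMatrix_apply, Matrix.map_apply]
    rw [star_sum]
    refine Finset.sum_congr rfl fun j _ => ?_
    rw [star_mul']
    congr 1
    exact (Complex.conj_ofReal (K x j)).symm
  have hgre_star : ∀ z, gre (star z) = star (gre z) := by
    intro z
    simp [hgre, Complex.star_def, Complex.conj_ofReal]
  have hgim_star : ∀ z, gim (star z) = star (gim z) := by
    intro z
    simp only [hgim, Complex.star_def, Complex.conj_im, _root_.map_mul, Complex.conj_ofReal,
      Complex.conj_I, Complex.ofReal_neg]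
    ring
  obtain ⟨Kr, hKr⟩ := S.exists_real_of_star_comm hreal gre hgre_star
  obtain ⟨Ki, hKi⟩ := S.exists_real_of_star_comm hreal gim hgim_star
  set Kn : Matrix (Fin n) (Fin n) ℝ := K - Kr - Ki with hKn
  have hKrc : φ.mapMatrix Kr = E (S.diagEndo gre) := by
    rw [RingHom.mapMatrix_apply, hE]
    exact hKr
  have hKic : φ.mapMatrix Ki = E (S.diagEndo gim) := by
    rw [RingHom.mapMatrix_apply, hE]
    exact hKi
  have hdiagsum : S.diagEndo gre + S.diagEndo gim = S.diagEndo id := by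
    rw [S.diagEndo_add]
    congr 1
    funext z
    exact Complex.re_add_im z
  have hnilp_eq : S.nilp = S.f - S.diagEndo id := rfl
  have hfsum : S.f = S.diagEndo gre + S.diagEndo gim + S.nilp := by
    rw [hnilp_eq, ← hdiagsum]
    abel
  have hKnc : φ.mapMatrix Kn = E S.nilp := by
    rw [hKn, _root_.map_sub, _root_.map_sub, hKrc, hKic]
    have : φ.mapMatrix K = E S.f := hEf.symm
    rw [this, ← _root_.map_sub, ← _root_.map_sub]
    congr 1
    rw [hfsum]
    abel
  have hcommC : ∀ (a b : Module.End ℂ (Fin n → ℂ)), Commute a b → Commute (E a) (E b) := by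
    intro a b hab
    unfold Commute SemiconjBy at hab ⊢
    rw [← _root_.map_mul, ← _root_.map_mul, hab]
  have hcommR : ∀ (X Y : Matrix (Fin n) (Fin n) ℝ) (a b : Module.End ℂ (Fin n → ℂ)),
      φ.mapMatrix X = E a → φ.mapMatrix Y = E b → Commute a b → Commute X Y := by
    intro X Y a b hX hY hab
    unfold Commute SemiconjBy
    apply mapinj
    rw [_root_.map_mul, _root_.map_mul, hX, hY]
    exact hcommC a b hab
  have hc_re_nilp : Commute (S.diagEndo gre) S.nilp := by
    rw [hnilp_eq]
    exact ((S.commute_f_diagEndo gre).symm).sub_right (S.commute_diagEndo gre id)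
  have hc_im_nilp : Commute (S.diagEndo gim) S.nilp := by
    rw [hnilp_eq]
    exact ((S.commute_f_diagEndo gim).symm).sub_right (S.commute_diagEndo gim id)
  refine ⟨⟨Kr, Ki, Kn⟩, ⟨?_, ?_, ?_, ?_, ?_, ?_, ?_⟩, ?_⟩
  · show K = Kr + Ki + Kn
    rw [hKn]
    abel
  · exact hcommR _ _ _ _ hKrc hKic (S.commute_diagEndo gre gim)
  · exact hcommR _ _ _ _ hKrc hKnc hc_re_nilp
  · exact hcommR _ _ _ _ hKic hKnc hc_im_nilp
  · refine ⟨S.P, Matrix.diagonal (fun i => gre (S.eigval i)), S.isUnit_detP,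
      Matrix.isDiag_diagonal _, ?_, ?_⟩
    · rw [show (Kr.map (algebraMap ℝ ℂ)) = φ.mapMatrix Kr from rfl, hKrc, hE]
      exact S.toMatrix'_diagEndo gre
    · intro i
      simp [hgre]
  · refine ⟨S.P, Matrix.diagonal (fun i => gim (S.eigval i)), S.isUnit_detP,
      Matrix.isDiag_diagonal _, ?_, ?_⟩
    · rw [show (Ki.map (algebraMap ℝ ℂ)) = φ.mapMatrix Ki from rfl, hKic, hE]
      exact S.toMatrix'_diagEndo gim
    · intro i
      simp [hgim]
  · refine ⟨n, mapinj _ _ ?_⟩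
    rw [_root_.map_pow, hKnc, ← _root_.map_pow, S.nilp_pow_n, _root_.map_zero, _root_.map_zero]
  · rintro ⟨R, I2, N2⟩ ⟨hsumR, hRI, hRN, hIN, hdR, hdI, hnil⟩
    set r : Module.End ℂ (Fin n → ℂ) := Matrix.toLinAlgEquiv' (φ.mapMatrix R) with hrdef
    set i2 : Module.End ℂ (Fin n → ℂ) := Matrix.toLinAlgEquiv' (φ.mapMatrix I2) with hidef
    set n2 : Module.End ℂ (Fin n → ℂ) := Matrix.toLinAlgEquiv' (φ.mapMatrix N2) with hndef
    have hEr : E r = φ.mapMatrix R := LinearMap.toMatrixAlgEquiv'_toLinAlgEquiv' _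
    have hEi : E i2 = φ.mapMatrix I2 := LinearMap.toMatrixAlgEquiv'_toLinAlgEquiv' _
    have hEn : E n2 = φ.mapMatrix N2 := LinearMap.toMatrixAlgEquiv'_toLinAlgEquiv' _
    have hsumE : S.f = r + i2 + n2 := by
      apply E.injective
      rw [hEf, _root_.map_add, _root_.map_add, hEr, hEi, hEn, hAc, hsumR, _root_.map_add, _root_.map_add]
    have hcommE : ∀ (X Y : Matrix (Fin n) (Fin n) ℝ), Commute X Y →
        Commute (Matrix.toLinAlgEquiv' (φ.mapMatrix X)) (Matrix.toLinAlgEquiv' (φ.mapMatrix Y)) := by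
      intro X Y h
      unfold Commute SemiconjBy at h ⊢
      rw [← _root_.map_mul, ← _root_.map_mul, ← _root_.map_mul, ← _root_.map_mul, h]
    obtain ⟨P1, D1, hu1, hD1, hmap1, hpred1⟩ := hdR
    obtain ⟨sr, hsr, hr⟩ := exists_annihilating (fun z => z.im = 0) (Ac := φ.mapMatrix R)
      hu1 hD1 (by rw [RingHom.mapMatrix_apply]; exact hmap1) hpred1
    obtain ⟨P2, D2, hu2, hD2, hmap2, hpred2⟩ := hdI
    obtain ⟨si, hsi, hi⟩ := exists_annihilating (fun z => z.re = 0) (Ac := φ.mapMatrix I2)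
      hu2 hD2 (by rw [RingHom.mapMatrix_apply]; exact hmap2) hpred2
    obtain ⟨k, hk⟩ := hnil
    have hn2 : IsNilpotent n2 := by
      refine ⟨k, ?_⟩
      rw [hndef, ← _root_.map_pow, ← _root_.map_pow, hk, _root_.map_zero, _root_.map_zero]
    obtain ⟨hrEq, hiEq⟩ := unique_core S r i2 n2 hsumE
      (hcommE R I2 hRI) (hcommE R N2 hRN) (hcommE I2 N2 hIN)
      sr hsr hr si hsi hi hn2
    have hReq : R = Kr := by
      apply mapinj
      rw [← hEr, hrEq, hKrc]
    have hIeq : I2 = Ki := by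
      apply mapinj
      rw [← hEi, hiEq, hKic]
    have hNeq : N2 = Kn := by
      have : N2 = K - R - I2 := by
        rw [hsumR]
        abel
      rw [this, hReq, hIeq, hKn]
    show (R, I2, N2) = (Kr, Ki, Kn)
    rw [hReq, hIeq, hNeq]
end

section
/- Let exp(tK) act on a Jordan chain v₁,...,v_m (N v_l = v_{l-1}) of a single Jordan block with eigenvalue λ ∈ ℝ. The volume (Gram determinant) of the parallelepiped spanned by exp(tK)v_{r₁},...,exp(tK)v_{r_n} for indices 1 ≤ r₁ < ... < r_n ≤ m satisfies: (1/t)·log Vol → n·λ and (log Vol - n λ t)/log t → (Σⱼ rⱼ) - n(n+1)/2 as t → ∞. -/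
open Matrix Filter

/-- The nilpotent shift on `ℝ^m`. -/
def shiftMatrix (m : ℕ) : Matrix (Fin m) (Fin m) ℝ :=
  Matrix.of fun i j => if (i : ℕ) + 1 = (j : ℕ) then 1 else 0

/-- Volume (square root of the Gram determinant w.r.t. the Euclidean inner
product) of the parallelepiped spanned by vectors `w 0, …, w (n-1)`. -/
noncomputable def gramVol {n m : ℕ} (w : Fin n → Fin m → ℝ) : ℝ :=
  Real.sqrt (Matrix.det (Matrix.of fun i j => ∑ k, w i k * w j k))

section Helpers

open Finset Equiv

lemma shift_pow (m i : ℕ) (a b : Fin m) :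
    ((shiftMatrix m) ^ i) a b = if (a : ℕ) + i = (b : ℕ) then 1 else 0 := by
  induction i generalizing b with
  | zero => simp [Matrix.one_apply, Fin.ext_iff]
  | succ i ih =>
    rw [pow_succ, Matrix.mul_apply]
    by_cases hb : (a : ℕ) + (i + 1) = (b : ℕ)
    · have hai : (a : ℕ) + i < m := by omega
      rw [Finset.sum_eq_single (⟨(a : ℕ) + i, hai⟩ : Fin m)]
      · rw [ih, if_pos rfl, one_mul, if_pos hb]
        simp only [shiftMatrix, Matrix.of_apply, Fin.val_mk]
        rw [if_pos (by omega)]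
      · intro c _ hc
        rw [ih]
        by_cases h : (a : ℕ) + i = (c : ℕ)
        · exact absurd (Fin.ext h.symm) (by simpa [eq_comm] using hc)
        · rw [if_neg h, zero_mul]
      · simp
    · rw [if_neg hb, Finset.sum_eq_zero]
      intro c _
      rw [ih]
      by_cases h : (a : ℕ) + i = (c : ℕ)
      · simp only [shiftMatrix, Matrix.of_apply]
        rw [if_pos h, one_mul, if_neg (by omega)]
      · rw [if_neg h, zero_mul]

lemma shift_pow_zero (m : ℕ) {i : ℕ} (h : m ≤ i) : (shiftMatrix m) ^ i = 0 := by
  ext a b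
  rw [shift_pow, Matrix.zero_apply, if_neg (by omega)]

lemma exp_shift (m : ℕ) (t : ℝ) :
    NormedSpace.exp (t • shiftMatrix m) =
      ∑ i ∈ range m, (t ^ i / i.factorial) • (shiftMatrix m) ^ i := by
  rw [NormedSpace.exp_eq_tsum ℝ]
  have h : ∀ i : ℕ, ((i.factorial : ℝ)⁻¹ : ℝ) • (t • shiftMatrix m) ^ i
      = (t ^ i / i.factorial) • (shiftMatrix m) ^ i := by
    intro i
    rw [smul_pow, smul_smul, div_eq_mul_inv, mul_comm]
  simp_rw [h]
  exact tsum_eq_sum (fun i hi => by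
    rw [shift_pow_zero m (by simpa using hi), smul_zero])

lemma exp_shift_apply (m : ℕ) (t : ℝ) (k l : Fin m) :
    NormedSpace.exp (t • shiftMatrix m) k l =
      if (k : ℕ) ≤ (l : ℕ) then t ^ ((l : ℕ) - k) / ((l : ℕ) - k).factorial else 0 := by
  rw [exp_shift]
  rw [Matrix.sum_apply]
  simp_rw [Matrix.smul_apply, shift_pow, smul_eq_mul]
  by_cases hkl : (k : ℕ) ≤ (l : ℕ)
  · rw [Finset.sum_eq_single ((l : ℕ) - (k : ℕ))]
    · rw [if_pos (by omega), if_pos hkl, mul_one]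
    · intro i _ hi
      rw [if_neg (by omega), mul_zero]
    · intro h
      exact absurd (Finset.mem_range.mpr (by omega)) h
  · rw [if_neg hkl, Finset.sum_eq_zero]
    intro i _
    rw [if_neg (by omega), mul_zero]

lemma exp_smul_one (m : ℕ) (c : ℝ) :
    NormedSpace.exp (c • (1 : Matrix (Fin m) (Fin m) ℝ)) = Real.exp c • 1 := by
  have h1 : c • (1 : Matrix (Fin m) (Fin m) ℝ) = Matrix.diagonal (fun _ => c) := by
    ext i j
    by_cases h : i = j <;> simp [Matrix.one_apply, Matrix.diagonal_apply, h]
  rw [h1, Matrix.exp_diagonal]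
  ext i j
  have h2 : NormedSpace.exp (fun _ : Fin m => c) = fun _ : Fin m => Real.exp c := by
    funext i
    rw [Pi.coe_exp, Real.exp_eq_exp_ℝ]
  rw [h2]
  by_cases h : i = j <;> simp [Matrix.one_apply, Matrix.diagonal_apply, h]

lemma exp_tK (m : ℕ) (lam t : ℝ) :
    NormedSpace.exp (t • (lam • (1 : Matrix (Fin m) (Fin m) ℝ) + shiftMatrix m)) =
      Real.exp (t * lam) • NormedSpace.exp (t • shiftMatrix m) := by
  have h1 : t • (lam • (1 : Matrix (Fin m) (Fin m) ℝ) + shiftMatrix m)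
      = (t * lam) • (1 : Matrix (Fin m) (Fin m) ℝ) + t • shiftMatrix m := by
    rw [smul_add, smul_smul]
  rw [h1, Matrix.exp_add_of_commute _ _ (((Commute.one_left (t • shiftMatrix m)).smul_left _)),
    exp_smul_one, Matrix.smul_mul, Matrix.one_mul]

instance decStrictMonoFin {n m : ℕ} : DecidablePred (StrictMono : (Fin n → Fin m) → Prop) :=
  fun f => decidable_of_iff (∀ a b, a < b → f a < f b) Iff.rfl

lemma det_mul_eq_sum_funcs {R : Type*} [CommRing R] {n m : ℕ} (A : Matrix (Fin n) (Fin m) R) (B : Matrix (Fin m) (Fin n) R) :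
    (A * B).det = ∑ p : Fin n → Fin m, (A.submatrix id p).det * ∏ i, B (p i) i := by
  rw [det_apply']
  simp only [mul_apply, prod_univ_sum, mul_sum, Fintype.piFinset_univ]
  rw [Finset.sum_comm]
  refine Finset.sum_congr rfl fun p _ => ?_
  rw [det_apply', Finset.sum_mul]
  refine Finset.sum_congr rfl fun σ _ => ?_
  rw [Finset.prod_mul_distrib, mul_assoc]
  rfl

lemma det_submatrix_eq_zero_of_not_injective {R : Type*} [CommRing R] {n m : ℕ} (A : Matrix (Fin n) (Fin m) R)
    (p : Fin n → Fin m) (hp : ¬ Function.Injective p) : (A.submatrix id p).det = 0 := by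
  rw [Function.not_injective_iff] at hp
  obtain ⟨i, j, hpij, hij⟩ := hp
  exact Matrix.det_zero_of_column_eq hij (fun k => by simp [hpij])

lemma sort_comp {n m : ℕ} (s : Fin n → Fin m) (hs : StrictMono s) (σ : Perm (Fin n)) :
    Tuple.sort (s ∘ σ) = σ⁻¹ := by
  have hinj : Function.Injective (s ∘ σ) := hs.injective.comp σ.injective
  have h1 : Monotone ((s ∘ σ) ∘ (Tuple.sort (s ∘ σ))) := Tuple.monotone_sort _
  have h2 : Monotone ((s ∘ σ) ∘ (σ⁻¹ : Perm (Fin n))) := by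
    have he : (s ∘ σ) ∘ (σ⁻¹ : Perm (Fin n)) = s := by
      funext i; simp
    rw [he]; exact hs.monotone
  have h3 := Tuple.unique_monotone h1 h2
  ext i
  exact congrArg Fin.val (hinj (congrFun h3 i))

def sortEquiv (n m : ℕ) : ({f : Fin n → Fin m // StrictMono f} × Perm (Fin n)) ≃
    {p : Fin n → Fin m // Function.Injective p} where
  toFun x := ⟨x.1.1 ∘ x.2, x.1.2.injective.comp x.2.injective⟩
  invFun q := ⟨⟨q.1 ∘ Tuple.sort q.1,
    (Tuple.monotone_sort q.1).strictMono_of_injective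
      (q.2.comp (Tuple.sort q.1).injective)⟩, (Tuple.sort q.1)⁻¹⟩
  left_inv := by
    rintro ⟨s, σ⟩
    have h := sort_comp s.1 s.2 σ
    refine Prod.ext (Subtype.ext ?_) ?_
    · show (s.1 ∘ σ) ∘ (Tuple.sort (s.1 ∘ σ)) = s.1
      rw [h]; funext i; simp
    · show (Tuple.sort (s.1 ∘ σ))⁻¹ = σ
      rw [h, inv_inv]
  right_inv := by
    rintro ⟨p, hp⟩
    refine Subtype.ext ?_
    show (p ∘ Tuple.sort p) ∘ ((Tuple.sort p)⁻¹ : Perm (Fin n)) = p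
    funext i; simp

theorem cauchy_binet {R : Type*} [CommRing R] {n m : ℕ} (A : Matrix (Fin n) (Fin m) R) (B : Matrix (Fin m) (Fin n) R) :
    (A * B).det = ∑ s : {f : Fin n → Fin m // StrictMono f},
      (A.submatrix id s.1).det * (B.submatrix s.1 id).det := by
  rw [det_mul_eq_sum_funcs]
  rw [← Finset.sum_filter_of_ne (p := fun p => Function.Injective p)
    (fun p _ h => by
      by_contra hinj
      exact h (by rw [det_submatrix_eq_zero_of_not_injective A p hinj, zero_mul]))]
  have key : ∑ p ∈ univ.filter (fun p : Fin n → Fin m => Function.Injective p),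
      (A.submatrix id p).det * ∏ i, B (p i) i
      = ∑ x : {f : Fin n → Fin m // StrictMono f} × Perm (Fin n),
        (A.submatrix id (x.1.1 ∘ x.2)).det * ∏ i, B (x.1.1 (x.2 i)) i := by
    have h1 : (∑ p ∈ univ.filter (fun p : Fin n → Fin m => Function.Injective p),
        (A.submatrix id p).det * ∏ i, B (p i) i)
        = ∑ q : {p : Fin n → Fin m // Function.Injective p},
          (A.submatrix id q.1).det * ∏ i, B (q.1 i) i :=
      Finset.sum_subtype _ (by simp) _
    rw [h1]
    exact (Fintype.sum_equiv (sortEquiv n m) _ _ (fun x => rfl)).symm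
  rw [key, Fintype.sum_prod_type]
  refine Finset.sum_congr rfl fun s _ => ?_
  have hperm : ∀ σ : Perm (Fin n),
      (A.submatrix id (s.1 ∘ σ)).det = (Perm.sign σ : ℤ) * (A.submatrix id s.1).det := by
    intro σ
    have : A.submatrix id (s.1 ∘ σ) = (A.submatrix id s.1).submatrix id σ := by
      rw [Matrix.submatrix_submatrix]
      rfl
    rw [this, Matrix.det_permute']
  calc ∑ σ : Perm (Fin n), (A.submatrix id (s.1 ∘ σ)).det * ∏ i, B (s.1 (σ i)) i
      = (A.submatrix id s.1).det * ∑ σ : Perm (Fin n),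
          ((Perm.sign σ : ℤ) : R) * ∏ i, (B.submatrix s.1 id) (σ i) i := by
        rw [Finset.mul_sum]
        refine Finset.sum_congr rfl fun σ _ => ?_
        rw [hperm σ]
        push_cast
        ring_nf
        rfl
    _ = (A.submatrix id s.1).det * (B.submatrix s.1 id).det := by rw [← det_apply']

noncomputable def coefMat {n m : ℕ} (r s : Fin n → Fin m) : Matrix (Fin n) (Fin n) ℝ :=
  Matrix.of fun j i => if (s i : ℕ) ≤ (r j : ℕ) then
    ((((r j : ℕ) - (s i : ℕ)).factorial : ℝ))⁻¹ else 0

lemma strictMono_le_apply {n m : ℕ} {s : Fin n → Fin m} (hs : StrictMono s) (i : Fin n) :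
    (i : ℕ) ≤ (s i : ℕ) := by
  have key : ∀ k : ℕ, ∀ i : Fin n, (i : ℕ) = k → (i : ℕ) ≤ (s i : ℕ) := by
    intro k
    induction k with
    | zero => intro i h; omega
    | succ k ih =>
      intro i h
      have hk : k < n := by omega
      have h1 := hs (show (⟨k, hk⟩ : Fin n) < i by rw [Fin.lt_def]; simp; omega)
      have h2 := ih ⟨k, hk⟩ rfl
      rw [Fin.lt_def] at h1
      simp at h1 h2
      omega
  exact key _ i rfl

lemma det_coefMat_pos {n m : ℕ} (r s : Fin n → Fin m) (hr : StrictMono r)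
    (hs : ∀ i, (s i : ℕ) = (i : ℕ)) : 0 < (coefMat r s).det := by
  have hvpos : 0 < (Matrix.vandermonde (fun j : Fin n => ((r j : ℕ) : ℝ))).det := by
    rw [Matrix.det_vandermonde]
    refine Finset.prod_pos fun i _ => Finset.prod_pos fun j hj => ?_
    rw [Finset.mem_Ioi] at hj
    have := hr hj
    rw [sub_pos]
    exact_mod_cast this
  have key : (∏ j, ((Nat.factorial (r j : ℕ) : ℝ))) * (coefMat r s).det
      = (Matrix.vandermonde (fun j : Fin n => ((r j : ℕ) : ℝ))).det := by
    rw [← Matrix.det_mul_column (fun j => ((Nat.factorial (r j : ℕ) : ℝ))) (coefMat r s),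
      Matrix.det_eval_matrixOfPolynomials_eq_det_vandermonde (fun j => ((r j : ℕ) : ℝ))
        (fun i => descPochhammer ℝ i) (fun i => descPochhammer_natDegree (R := ℝ) i)
        (fun i => monic_descPochhammer ℝ i)]
    congr 1
    ext j i
    rw [Matrix.of_apply, Matrix.of_apply, descPochhammer_eval_eq_descFactorial]
    rw [coefMat, Matrix.of_apply, hs i]
    by_cases h : (i : ℕ) ≤ (r j : ℕ)
    · rw [if_pos h]
      have hf := Nat.factorial_mul_descFactorial h
      have : ((r j : ℕ).factorial : ℝ) = (((r j : ℕ) - i).factorial : ℝ) *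
          ((r j : ℕ).descFactorial i : ℝ) := by exact_mod_cast hf.symm
      rw [this]
      have hfz : (((r j : ℕ) - i).factorial : ℝ) ≠ 0 := by
        exact_mod_cast Nat.factorial_ne_zero _
      field_simp
    · rw [if_neg h, mul_zero, Nat.descFactorial_eq_zero_iff_lt.mpr (by omega), Nat.cast_zero]
  have hfpos : 0 < ∏ j, ((Nat.factorial (r j : ℕ) : ℝ)) :=
    Finset.prod_pos fun j _ => by exact_mod_cast Nat.factorial_pos _
  nlinarith [hvpos, hfpos]

noncomputable def Wmat (m : ℕ) {n : ℕ} (r : Fin n → Fin m) (t : ℝ) : Matrix (Fin n) (Fin m) ℝ :=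
  Matrix.of fun j k => NormedSpace.exp (t • shiftMatrix m) k (r j)

lemma det_Wsub {n m : ℕ} (r s : Fin n → Fin m) (t : ℝ) :
    ((Wmat m r t).submatrix id s).det * ∏ i, t ^ (s i : ℕ)
      = t ^ (∑ j, (r j : ℕ)) * (coefMat r s).det := by
  have h1 : (Matrix.of fun j i => t ^ (s i : ℕ) * ((Wmat m r t).submatrix id s) j i).det
      = (∏ i, t ^ (s i : ℕ)) * ((Wmat m r t).submatrix id s).det :=
    Matrix.det_mul_row _ _
  have h2 : (Matrix.of fun j i => t ^ (s i : ℕ) * ((Wmat m r t).submatrix id s) j i)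
      = (Matrix.of fun j i => t ^ (r j : ℕ) * coefMat r s j i) := by
    ext j i
    simp only [Matrix.of_apply, Matrix.submatrix_apply, id_eq, Wmat, coefMat,
      exp_shift_apply]
    by_cases h : (s i : ℕ) ≤ (r j : ℕ)
    · rw [if_pos h, if_pos h, div_eq_mul_inv, ← mul_assoc, ← pow_add]
      congr 2
      omega
    · rw [if_neg h, if_neg h, mul_zero, mul_zero]
  have h3 : (Matrix.of fun j i => t ^ (r j : ℕ) * coefMat r s j i).det
      = (∏ j, t ^ (r j : ℕ)) * (coefMat r s).det :=
    Matrix.det_mul_column _ _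
  rw [mul_comm, ← h1, h2, h3, Finset.prod_pow_eq_pow_sum]

lemma sum_fin_id (n : ℕ) : 2 * ∑ i : Fin n, (i : ℕ) = n * (n - 1) := by
  rw [Fin.sum_univ_eq_sum_range (fun i => i) n, mul_comm]
  exact Finset.sum_range_id_mul_two n

lemma nn_le_two_sum {n m : ℕ} {s : Fin n → Fin m} (hs : StrictMono s) :
    n * (n - 1) ≤ 2 * ∑ i, (s i : ℕ) := by
  rw [← sum_fin_id n]
  have := Finset.sum_le_sum (fun i (_ : i ∈ univ) => strictMono_le_apply hs i)
  omega

theorem main_asymp {n m : ℕ} (r : Fin n → Fin m) (hr : StrictMono r) :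
    ∃ L : ℝ, 0 < L ∧ Tendsto (fun t : ℝ => (Wmat m r t * (Wmat m r t)ᵀ).det
      / t ^ (2 * (∑ j, (r j : ℕ)) - n * (n - 1))) atTop (nhds L) := by
  classical
  set D : ℕ := 2 * (∑ j, (r j : ℕ)) - n * (n - 1) with hD
  set E : {f : Fin n → Fin m // StrictMono f} → ℕ :=
    fun s => 2 * (∑ i, (s.1 i : ℕ)) - n * (n - 1) with hE
  set c : {f : Fin n → Fin m // StrictMono f} → ℝ := fun s => (coefMat r s.1).det with hc
  -- pointwise identity for t > 0
  have hpoint : ∀ t : ℝ, 0 < t →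
      (Wmat m r t * (Wmat m r t)ᵀ).det / t ^ D = ∑ s, (c s) ^ 2 / t ^ (E s) := by
    intro t ht
    rw [cauchy_binet, Finset.sum_div]
    refine Finset.sum_congr rfl fun s _ => ?_
    have hsub : ((Wmat m r t)ᵀ).submatrix s.1 id = ((Wmat m r t).submatrix id s.1)ᵀ := by
      ext a b; simp [Matrix.transpose_apply]
    rw [hsub, Matrix.det_transpose, ← sq]
    have hws := det_Wsub r s.1 t
    have htne : (t : ℝ) ≠ 0 := ne_of_gt ht
    have hpne : ∀ k : ℕ, t ^ k ≠ 0 := fun k => pow_ne_zero k htne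
    -- (det Wsub)^2 = c s ^ 2 * t^(2Σr) / t^(2Σs)
    have hsq : ((Wmat m r t).submatrix id s.1).det ^ 2 * (t ^ (∑ i, (s.1 i : ℕ))) ^ 2
        = (t ^ (∑ j, (r j : ℕ))) ^ 2 * (c s) ^ 2 := by
      rw [← mul_pow, ← Finset.prod_pow_eq_pow_sum, hws, mul_pow]
    have h1 : n * (n - 1) ≤ 2 * ∑ i, (s.1 i : ℕ) := nn_le_two_sum s.2
    have h2 : n * (n - 1) ≤ 2 * ∑ j, (r j : ℕ) := nn_le_two_sum hr
    -- goal : det^2 / t^D = c^2 / t^(E s)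
    field_simp
    apply mul_right_cancel₀ (hpne (2 * ∑ i, (s.1 i : ℕ)))
    have e1 : (t ^ (∑ i, (s.1 i : ℕ))) ^ 2 = t ^ (2 * ∑ i, (s.1 i : ℕ)) := by
      rw [← pow_mul, mul_comm]
    have e2 : (t ^ (∑ j, (r j : ℕ))) ^ 2 = t ^ (2 * ∑ j, (r j : ℕ)) := by
      rw [← pow_mul, mul_comm]
    calc ((Wmat m r t).submatrix id s.1).det ^ 2 * t ^ (E s) * t ^ (2 * ∑ i, (s.1 i : ℕ))
        = ((Wmat m r t).submatrix id s.1).det ^ 2 * (t ^ (∑ i, (s.1 i : ℕ))) ^ 2 * t ^ (E s) := by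
          rw [e1]; ring
      _ = (t ^ (∑ j, (r j : ℕ))) ^ 2 * (c s) ^ 2 * t ^ (E s) := by rw [hsq]
      _ = (c s) ^ 2 * (t ^ (2 * ∑ j, (r j : ℕ) + E s)) := by rw [pow_add]; ring
      _ = (c s) ^ 2 * (t ^ (D + 2 * ∑ i, (s.1 i : ℕ))) := by
          congr 2
          simp only [hE, hD]
          omega
      _ = (c s) ^ 2 * t ^ D * t ^ (2 * ∑ i, (s.1 i : ℕ)) := by rw [pow_add]; ring
      _ = t ^ D * (c s) ^ 2 * t ^ (2 * ∑ i, (s.1 i : ℕ)) := by ring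
  -- limits
  have hterm : ∀ s : {f : Fin n → Fin m // StrictMono f},
      Tendsto (fun t : ℝ => (c s) ^ 2 / t ^ (E s)) atTop
        (nhds (if E s = 0 then (c s) ^ 2 else 0)) := by
    intro s
    by_cases h : E s = 0
    · simpa [h] using (tendsto_const_nhds :
        Tendsto (fun _ : ℝ => (c s) ^ 2) atTop (nhds ((c s) ^ 2)))
    · rw [if_neg h]
      exact Tendsto.div_atTop tendsto_const_nhds (tendsto_pow_atTop h)
  set s₀ : {f : Fin n → Fin m // StrictMono f} :=
    ⟨fun i => ⟨(i : ℕ), lt_of_le_of_lt (strictMono_le_apply hr i) (r i).isLt⟩,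
      fun a b hab => hab⟩ with hs₀
  refine ⟨∑ s, (if E s = 0 then (c s) ^ 2 else 0), ?_, ?_⟩
  · have hpos : 0 < (if E s₀ = 0 then (c s₀) ^ 2 else 0) := by
      have hE0 : E s₀ = 0 := by
        have hsum : ∑ i, (s₀.1 i : ℕ) = ∑ i : Fin n, (i : ℕ) := rfl
        have h2 := sum_fin_id n
        simp only [hE]
        omega
      rw [if_pos hE0]
      have := det_coefMat_pos r s₀.1 hr (fun i => rfl)
      positivity
    refine lt_of_lt_of_le hpos (Finset.single_le_sum (f := fun s => if E s = 0 then (c s) ^ 2 else 0)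
      (fun s _ => by positivity) (Finset.mem_univ s₀))
  · refine Tendsto.congr' ?_ (tendsto_finset_sum _ (fun s _ => hterm s))
    filter_upwards [eventually_gt_atTop (0 : ℝ)] with t ht
    exact (hpoint t ht).symm

end Helpers

/-- For a single Jordan block `K = λI + N` of size `m` and strictly increasing
chain indices `r 0 < … < r (n-1)` (0-indexed; the 1-indexed `r_j` is `r j + 1`),
the volume of the parallelepiped spanned by `exp(tK) e_{r j}` satisfies
`(1/t)·log Vol → n·λ` and
`(log Vol - nλt)/log t → (∑_j r_j) - n(n+1)/2` as `t → ∞`. -/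
theorem stmt_9 (m n : ℕ) (lam : ℝ) (K : Matrix (Fin m) (Fin m) ℝ)
    (hK : K = lam • (1 : Matrix (Fin m) (Fin m) ℝ) + shiftMatrix m)
    (r : Fin n → Fin m) (hr : StrictMono r) :
    Tendsto (fun t : ℝ =>
        Real.log (gramVol (fun j =>
          (NormedSpace.exp (t • K)).mulVec (Pi.single (r j) 1))) / t)
      atTop (nhds (n * lam)) ∧
    Tendsto (fun t : ℝ =>
        (Real.log (gramVol (fun j =>
          (NormedSpace.exp (t • K)).mulVec (Pi.single (r j) 1)))
          - n * lam * t) / Real.log t)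
      atTop (nhds ((∑ j : Fin n, ((r j : ℕ) + 1 : ℝ)) - n * (n + 1) / 2)) := by
  classical
  set D : ℕ := 2 * (∑ j, (r j : ℕ)) - n * (n - 1) with hD
  set Q : ℝ → ℝ := fun t => (Wmat m r t * (Wmat m r t)ᵀ).det with hQdef
  set V : ℝ → ℝ := fun t => gramVol (fun j =>
    (NormedSpace.exp (t • K)).mulVec (Pi.single (r j) 1)) with hV
  obtain ⟨L, hL, hQ⟩ := main_asymp r hr
  -- Gram determinant identity
  have hgram : ∀ t : ℝ, V t = Real.sqrt ((Real.exp (t * lam) ^ 2) ^ n * Q t) := by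
    intro t
    have hw : ∀ j k, (NormedSpace.exp (t • K)).mulVec (Pi.single (r j) 1) k
        = Real.exp (t * lam) * Wmat m r t j k := by
      intro j k
      rw [hK, exp_tK, Matrix.smul_mulVec, Pi.smul_apply, Matrix.mulVec_single,
        smul_eq_mul]
      simp [Wmat]
    rw [hV]
    show gramVol _ = _
    rw [gramVol]
    congr 1
    have : (Matrix.of fun i j => ∑ k, ((NormedSpace.exp (t • K)).mulVec (Pi.single (r i) 1)) k
        * ((NormedSpace.exp (t • K)).mulVec (Pi.single (r j) 1)) k)
        = (Real.exp (t * lam) ^ 2) • (Wmat m r t * (Wmat m r t)ᵀ) := by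
      ext i j
      simp only [Matrix.of_apply, Matrix.smul_apply, Matrix.mul_apply, Matrix.transpose_apply,
        smul_eq_mul, hw]
      rw [Finset.mul_sum]
      refine Finset.sum_congr rfl fun k _ => by ring
    rw [this, Matrix.det_smul, Fintype.card_fin]
  -- eventual positivity and log formula
  have hev : ∀ᶠ t : ℝ in atTop, Real.log (V t)
      = (n : ℝ) * lam * t + (D : ℝ) / 2 * Real.log t + Real.log (Q t / t ^ D) / 2 := by
    filter_upwards [eventually_gt_atTop (1 : ℝ),
      hQ.eventually (eventually_gt_nhds (half_lt_self hL))] with t ht1 htQ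
    have ht0 : (0 : ℝ) < t := lt_trans one_pos ht1
    have htD : (0 : ℝ) < t ^ D := pow_pos ht0 D
    have hQpos : 0 < Q t := by
      have h2 : 0 < Q t / t ^ D := lt_trans (half_pos hL) htQ
      have := mul_pos h2 htD
      rwa [div_mul_cancel₀ _ (ne_of_gt htD)] at this
    rw [hgram t, Real.log_sqrt (by positivity)]
    have hlogQ : Real.log (Q t / t ^ D) = Real.log (Q t) - (D : ℝ) * Real.log t := by
      rw [Real.log_div (ne_of_gt hQpos) (ne_of_gt htD), Real.log_pow]
    rw [Real.log_mul (by positivity) (ne_of_gt hQpos), Real.log_pow, Real.log_pow,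
      Real.log_exp, hlogQ]
    push_cast
    ring
  have hg : Tendsto (fun t : ℝ => Real.log (Q t / t ^ D)) atTop (nhds (Real.log L)) :=
    hQ.log (ne_of_gt hL)
  constructor
  · have h1 : Tendsto (fun t : ℝ => ((n : ℝ) * lam * t + (D : ℝ) / 2 * Real.log t
        + Real.log (Q t / t ^ D) / 2) / t) atTop (nhds ((n : ℝ) * lam)) := by
      have ha : Tendsto (fun t : ℝ => (n : ℝ) * lam * t / t) atTop (nhds ((n : ℝ) * lam)) := by
        refine Tendsto.congr' ?_ tendsto_const_nhds
        filter_upwards [eventually_ne_atTop (0 : ℝ)] with t ht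
        field_simp
      have hb : Tendsto (fun t : ℝ => (D : ℝ) / 2 * Real.log t / t) atTop (nhds 0) := by
        have := Real.isLittleO_log_id_atTop.tendsto_div_nhds_zero
        have h2 := this.const_mul ((D : ℝ) / 2)
        rw [mul_zero] at h2
        refine h2.congr fun t => ?_
        simp [mul_div_assoc]
      have hc : Tendsto (fun t : ℝ => Real.log (Q t / t ^ D) / 2 / t) atTop (nhds 0) :=
        Tendsto.div_atTop (hg.div_const 2) tendsto_id
      have := (ha.add hb).add hc
      rw [add_zero, add_zero] at this
      refine this.congr fun t => ?_
      ring
    refine Tendsto.congr' ?_ h1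
    filter_upwards [hev] with t ht
    rw [ht]
  · have hcast : ((∑ j : Fin n, ((r j : ℕ) + 1 : ℝ)) - n * (n + 1) / 2) = (D : ℝ) / 2 := by
      have h2 : n * (n - 1) ≤ 2 * ∑ j, (r j : ℕ) := nn_le_two_sum hr
      have h4 : ((n * (n - 1) : ℕ) : ℝ) = (n : ℝ) * ((n : ℝ) - 1) := by
        cases n with
        | zero => simp
        | succ k => push_cast [Nat.succ_sub_one]; ring
      have h1 : (D : ℝ) = 2 * (∑ j, ((r j : ℕ) : ℝ)) - (n : ℝ) * ((n : ℝ) - 1) := by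
        rw [hD, Nat.cast_sub h2, h4]
        push_cast
        ring
      have h5 : (∑ j : Fin n, ((r j : ℕ) + 1 : ℝ)) = (∑ j, ((r j : ℕ) : ℝ)) + n := by
        rw [Finset.sum_add_distrib]
        simp
      rw [h5, h1]
      ring
    rw [hcast]
    have h1 : Tendsto (fun t : ℝ => ((D : ℝ) / 2 * Real.log t
        + Real.log (Q t / t ^ D) / 2) / Real.log t) atTop (nhds ((D : ℝ) / 2)) := by
      have ha : Tendsto (fun t : ℝ => (D : ℝ) / 2 * Real.log t / Real.log t) atTop
          (nhds ((D : ℝ) / 2)) := by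
        refine Tendsto.congr' ?_ tendsto_const_nhds
        filter_upwards [eventually_gt_atTop (1 : ℝ)] with t ht
        have : Real.log t ≠ 0 := ne_of_gt (Real.log_pos ht)
        field_simp
      have hc : Tendsto (fun t : ℝ => Real.log (Q t / t ^ D) / 2 / Real.log t) atTop (nhds 0) :=
        Tendsto.div_atTop (hg.div_const 2) Real.tendsto_log_atTop
      have := ha.add hc
      rw [add_zero] at this
      refine this.congr fun t => ?_
      ring
    refine Tendsto.congr' ?_ h1
    filter_upwards [hev] with t ht
    rw [ht]
    ring
end
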